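/- Let n ∈ ℕ and let z₁, z₂ ∈ ℂ satisfy |z₁|² + |z₂|² = 1, and define the (normalized) vector ψ ∈ ℂ^{n+1} by ψ_k = √C(n,k) · z₁^{n−k} · z₂^{k} for k ∈ {0,…,n}. Then the expectation values of the spin operators in the state ψ are ⟨ψ, J_x ψ⟩ = n·Re(conj(z₁)·z₂), ⟨ψ, J_y ψ⟩ = n·Im(conj(z₁)·z₂), and ⟨ψ, J_z ψ⟩ = (n/2)·(|z₁|² − |z₂|²). -/

import Mathlib

open Matrix Finset

/-- The spin matrix `J_x` for spin `j = n/2` (rows/columns indexed by `k = j − m ∈ {0,…,n}`):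
`(J_x)_{k,k+1} = (J_x)_{k+1,k} = (1/2)√((k+1)(n−k))`, all other entries zero. -/
noncomputable def Jx (n : ℕ) : Matrix (Fin (n + 1)) (Fin (n + 1)) ℂ :=
  Matrix.of fun k' k =>
    if (k : ℕ) = (k' : ℕ) + 1 then
      ((1 / 2 : ℝ) * Real.sqrt (((k' : ℕ) + 1 : ℝ) * ((n : ℝ) - (k' : ℕ))) : ℂ)
    else if (k' : ℕ) = (k : ℕ) + 1 then
      ((1 / 2 : ℝ) * Real.sqrt (((k : ℕ) + 1 : ℝ) * ((n : ℝ) - (k : ℕ))) : ℂ)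
    else 0

/-- The spin matrix `J_y` for spin `j = n/2`:
`(J_y)_{k,k+1} = −(i/2)√((k+1)(n−k))`, `(J_y)_{k+1,k} = (i/2)√((k+1)(n−k))`,
all other entries zero. -/
noncomputable def Jy (n : ℕ) : Matrix (Fin (n + 1)) (Fin (n + 1)) ℂ :=
  Matrix.of fun k' k =>
    if (k : ℕ) = (k' : ℕ) + 1 then
      -(Complex.I / 2) * (Real.sqrt (((k' : ℕ) + 1 : ℝ) * ((n : ℝ) - (k' : ℕ))) : ℂ)
    else if (k' : ℕ) = (k : ℕ) + 1 then
      (Complex.I / 2) * (Real.sqrt (((k : ℕ) + 1 : ℝ) * ((n : ℝ) - (k : ℕ))) : ℂ)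
    else 0

/-- The spin matrix `J_z` for spin `j = n/2`: diagonal with entries `n/2 − k`. -/
noncomputable def Jz (n : ℕ) : Matrix (Fin (n + 1)) (Fin (n + 1)) ℂ :=
  Matrix.diagonal fun k => ((n : ℂ) / 2 - (k : ℕ))

lemma sum_fin_ite {n : ℕ} (m : ℕ) (f : Fin (n+1) → ℂ) :
    ∑ j : Fin (n+1), (if (j : ℕ) = m then f j else 0)
      = if h : m < n + 1 then f ⟨m, h⟩ else 0 := by
  split_ifs with h
  · rw [Finset.sum_eq_single ⟨m, h⟩]
    · simp
    · intro b _ hb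
      rw [if_neg]
      intro hc; exact hb (Fin.ext hc)
    · simp
  · apply Finset.sum_eq_zero
    intro j _
    rw [if_neg]
    have := j.isLt; omega

lemma range_succ_ite (n : ℕ) (f : ℕ → ℂ) :
    ∑ k ∈ Finset.range (n+1), (if k < n then f k else 0) = ∑ k ∈ Finset.range n, f k := by
  rw [Finset.sum_range_succ, if_neg (lt_irrefl n), add_zero]
  exact Finset.sum_congr rfl fun k hk => if_pos (Finset.mem_range.mp hk)

lemma binom_one {n : ℕ} {A B : ℂ} (hAB : A + B = 1) :
    ∑ k ∈ Finset.range (n+1), (n.choose k : ℂ) * A ^ (n-k) * B ^ k = 1 := by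
  have h1 : (1:ℂ) = ∑ k ∈ Finset.range (n+1), B ^ k * A ^ (n-k) * (n.choose k : ℂ) := by
    rw [← add_pow, add_comm B A, hAB, one_pow]
  rw [h1]
  exact Finset.sum_congr rfl fun k _ => by ring

lemma binom_k {n : ℕ} {A B : ℂ} (hAB : A + B = 1) :
    ∑ k ∈ Finset.range (n+1), (n.choose k : ℂ) * (k : ℂ) * A ^ (n-k) * B ^ k
      = (n : ℂ) * B := by
  cases n with
  | zero => simp
  | succ m =>
    rw [Finset.sum_range_succ']
    have h0 : ((m+1).choose 0 : ℂ) * ((0:ℕ) : ℂ) * A ^ (m+1-0) * B ^ 0 = 0 := by simp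
    rw [h0, add_zero]
    have : ∀ k ∈ Finset.range (m+1),
        ((m+1).choose (k+1) : ℂ) * ((k+1 : ℕ) : ℂ) * A ^ (m+1-(k+1)) * B ^ (k+1)
          = ((m:ℂ)+1) * B * ((m.choose k : ℂ) * A ^ (m-k) * B ^ k) := by
      intro k _
      have hc : ((m+1) * m.choose k : ℕ) = ((m+1).choose (k+1) * (k+1) : ℕ) :=
        Nat.add_one_mul_choose_eq m k
      have hc' : ((m:ℂ)+1) * (m.choose k : ℂ) = ((m+1).choose (k+1) : ℂ) * ((k+1:ℕ) : ℂ) := by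
        exact_mod_cast congrArg (Nat.cast : ℕ → ℂ) hc
      have he : m + 1 - (k+1) = m - k := by omega
      rw [he]; rw [← hc']; ring
    rw [Finset.sum_congr rfl this, ← Finset.mul_sum, binom_one hAB]
    push_cast; ring

lemma binom_nk {n : ℕ} {A B : ℂ} (hAB : A + B = 1) :
    ∑ k ∈ Finset.range n, ((n.choose k * (n - k) : ℕ) : ℂ) * A ^ (n-1-k) * B ^ k
      = (n : ℂ) := by
  cases n with
  | zero => simp
  | succ m =>
    have : ∀ k ∈ Finset.range (m+1),
        (((m+1).choose k * (m+1 - k) : ℕ) : ℂ) * A ^ (m+1-1-k) * B ^ k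
          = ((m:ℂ)+1) * ((m.choose k : ℂ) * A ^ (m-k) * B ^ k) := by
      intro k _
      have hc : (m+1).choose k * (m+1-k) = (m+1) * m.choose k := by
        rw [← Nat.choose_succ_right_eq, ← Nat.add_one_mul_choose_eq]
      rw [hc]
      have he : m + 1 - 1 - k = m - k := by omega
      rw [he]; push_cast; ring
    rw [Finset.sum_congr rfl this, ← Finset.mul_sum, binom_one hAB]
    push_cast; ring

noncomputable def Psi (n : ℕ) (z₁ z₂ : ℂ) (k : ℕ) : ℂ :=
  (Real.sqrt (n.choose k : ℝ) : ℂ) * z₁ ^ (n - k) * z₂ ^ k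

lemma key_sqrt {n k : ℕ} (hk : k < n) :
    Real.sqrt (n.choose k : ℝ) * Real.sqrt (n.choose (k+1) : ℝ)
      * Real.sqrt (((k : ℝ) + 1) * ((n : ℝ) - (k : ℝ)))
      = ((n.choose k * (n - k) : ℕ) : ℝ) := by
  have h1 : ((k : ℝ) + 1) * ((n : ℝ) - (k : ℝ)) = (((k+1) * (n-k) : ℕ) : ℝ) := by
    push_cast [Nat.cast_sub hk.le]; ring
  rw [h1, ← Real.sqrt_mul (by positivity), ← Real.sqrt_mul (by positivity)]
  have h2 : (n.choose k : ℝ) * (n.choose (k+1) : ℝ) * (((k+1) * (n-k) : ℕ) : ℝ)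
      = (((n.choose k * (n-k) : ℕ) : ℝ)) ^ 2 := by
    have h3 : n.choose k * n.choose (k+1) * ((k+1) * (n-k))
        = (n.choose k * (n-k)) ^ 2 := by
      have := Nat.choose_succ_right_eq n k
      calc n.choose k * n.choose (k+1) * ((k+1) * (n-k))
          = n.choose k * (n.choose (k+1) * (k+1)) * (n-k) := by ring
        _ = n.choose k * (n.choose k * (n-k)) * (n-k) := by rw [this]
        _ = (n.choose k * (n-k)) ^ 2 := by ring
    exact_mod_cast congrArg (Nat.cast : ℕ → ℝ) h3
  rw [h2, Real.sqrt_sq (by positivity)]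

lemma key_sum (n : ℕ) (z₁ z₂ : ℂ)
    (hAB : ((‖z₁‖ ^ 2 : ℝ) : ℂ) + ((‖z₂‖ ^ 2 : ℝ) : ℂ) = 1) :
    ∑ k ∈ Finset.range n,
      starRingEnd ℂ (Psi n z₁ z₂ k) * Psi n z₁ z₂ (k+1)
        * ((Real.sqrt (((k : ℝ) + 1) * ((n : ℝ) - (k : ℝ)))) : ℂ)
      = (n : ℂ) * (starRingEnd ℂ z₁ * z₂) := by
  set A : ℂ := ((‖z₁‖ ^ 2 : ℝ) : ℂ) with hA
  set B : ℂ := ((‖z₂‖ ^ 2 : ℝ) : ℂ) with hB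
  have hA1 : starRingEnd ℂ z₁ * z₁ = A := by
    rw [mul_comm, Complex.mul_conj, Complex.normSq_eq_norm_sq]
  have hB1 : starRingEnd ℂ z₂ * z₂ = B := by
    rw [mul_comm, Complex.mul_conj, Complex.normSq_eq_norm_sq]
  have hterm : ∀ k ∈ Finset.range n,
      starRingEnd ℂ (Psi n z₁ z₂ k) * Psi n z₁ z₂ (k+1)
        * ((Real.sqrt (((k : ℝ) + 1) * ((n : ℝ) - (k : ℝ)))) : ℂ)
      = (starRingEnd ℂ z₁ * z₂) *
          (((n.choose k * (n - k) : ℕ) : ℂ) * A ^ (n-1-k) * B ^ k) := by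
    intro k hkr
    have hk : k < n := Finset.mem_range.mp hkr
    unfold Psi
    rw [_root_.map_mul, _root_.map_mul, _root_.map_pow, _root_.map_pow, Complex.conj_ofReal]
    have e1 : n - k = (n - 1 - k) + 1 := by omega
    have e2 : n - (k+1) = n - 1 - k := by omega
    have hsq : ((Real.sqrt (n.choose k : ℝ)) : ℂ) * ((Real.sqrt (n.choose (k+1) : ℝ)) : ℂ)
        * ((Real.sqrt (((k : ℝ) + 1) * ((n : ℝ) - (k : ℝ)))) : ℂ)
        = ((n.choose k * (n - k) : ℕ) : ℂ) := by
      rw [← Complex.ofReal_mul, ← Complex.ofReal_mul, key_sqrt hk]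
      norm_cast
    have hz1 : starRingEnd ℂ z₁ ^ (n-k) * z₁ ^ (n-(k+1))
        = A ^ (n-1-k) * starRingEnd ℂ z₁ := by
      rw [e1, e2, pow_succ, ← hA1, mul_pow]; ring
    have hz2 : starRingEnd ℂ z₂ ^ k * z₂ ^ (k+1) = B ^ k * z₂ := by
      rw [pow_succ, ← hB1, mul_pow]; ring
    calc ((Real.sqrt (n.choose k : ℝ)) : ℂ) * starRingEnd ℂ z₁ ^ (n-k)
            * starRingEnd ℂ z₂ ^ k
          * ((Real.sqrt (n.choose (k+1) : ℝ) : ℂ) * z₁ ^ (n-(k+1)) * z₂ ^ (k+1))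
          * ((Real.sqrt (((k : ℝ) + 1) * ((n : ℝ) - (k : ℝ)))) : ℂ)
        = (((Real.sqrt (n.choose k : ℝ)) : ℂ) * ((Real.sqrt (n.choose (k+1) : ℝ)) : ℂ)
            * ((Real.sqrt (((k : ℝ) + 1) * ((n : ℝ) - (k : ℝ)))) : ℂ))
          * (starRingEnd ℂ z₁ ^ (n-k) * z₁ ^ (n-(k+1)))
          * (starRingEnd ℂ z₂ ^ k * z₂ ^ (k+1)) := by ring
      _ = ((n.choose k * (n - k) : ℕ) : ℂ) * (A ^ (n-1-k) * starRingEnd ℂ z₁)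
          * (B ^ k * z₂) := by rw [hsq, hz1, hz2]
      _ = _ := by ring
  rw [Finset.sum_congr rfl hterm, ← Finset.mul_sum]
  have hnk : ∑ k ∈ Finset.range n, ((n.choose k * (n - k) : ℕ) : ℂ) * A ^ (n-1-k) * B ^ k
      = (n : ℂ) := by
    exact binom_nk hAB
  rw [hnk]; ring
lemma expect_offdiag (n : ℕ) (ψ : Fin (n+1) → ℂ) (Ψ' : ℕ → ℂ)
    (hψ : ∀ k : Fin (n+1), ψ k = Ψ' (k : ℕ)) (c d : ℕ → ℂ)
    (M : Matrix (Fin (n+1)) (Fin (n+1)) ℂ)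
    (hM : ∀ k j : Fin (n+1), M k j =
      if (j : ℕ) = (k : ℕ) + 1 then c (k : ℕ)
      else if (k : ℕ) = (j : ℕ) + 1 then d (j : ℕ) else 0) :
    ∑ k : Fin (n+1), starRingEnd ℂ (ψ k) * M.mulVec ψ k
      = ∑ k ∈ Finset.range n,
          (starRingEnd ℂ (Ψ' k) * Ψ' (k+1) * c k
            + starRingEnd ℂ (Ψ' (k+1)) * Ψ' k * d k) := by
  have hterm : ∀ k j : Fin (n+1), starRingEnd ℂ (ψ k) * (M k j * ψ j)
      = (if (j : ℕ) = (k : ℕ) + 1 then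
            starRingEnd ℂ (Ψ' (k : ℕ)) * Ψ' ((k : ℕ)+1) * c (k : ℕ) else 0)
        + (if (k : ℕ) = (j : ℕ) + 1 then
            starRingEnd ℂ (Ψ' ((j : ℕ)+1)) * Ψ' (j : ℕ) * d (j : ℕ) else 0) := by
    intro k j
    rw [hM, hψ k, hψ j]
    split_ifs with h1 h2 h2
    · omega
    · rw [h1]; ring
    · rw [h2]; ring
    · ring
  have hmv : ∀ k : Fin (n+1), starRingEnd ℂ (ψ k) * M.mulVec ψ k
      = ∑ j : Fin (n+1), starRingEnd ℂ (ψ k) * (M k j * ψ j) := by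
    intro k
    rw [Matrix.mulVec, dotProduct, Finset.mul_sum]
  rw [Finset.sum_congr rfl fun k _ => hmv k]
  rw [Finset.sum_congr rfl fun k _ => Finset.sum_congr rfl fun j _ => hterm k j]
  rw [Finset.sum_congr rfl fun k _ => Finset.sum_add_distrib]
  rw [Finset.sum_add_distrib]
  have hfst : ∑ k : Fin (n+1), ∑ j : Fin (n+1),
      (if (j : ℕ) = (k : ℕ) + 1 then
        starRingEnd ℂ (Ψ' (k : ℕ)) * Ψ' ((k : ℕ)+1) * c (k : ℕ) else 0)
      = ∑ k ∈ Finset.range n, starRingEnd ℂ (Ψ' k) * Ψ' (k+1) * c k := by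
    have h1 : ∀ k : Fin (n+1), ∑ j : Fin (n+1),
        (if (j : ℕ) = (k : ℕ) + 1 then
          starRingEnd ℂ (Ψ' (k : ℕ)) * Ψ' ((k : ℕ)+1) * c (k : ℕ) else 0)
        = if (k : ℕ) < n then starRingEnd ℂ (Ψ' (k : ℕ)) * Ψ' ((k : ℕ)+1) * c (k : ℕ)
          else 0 := by
      intro k
      rw [sum_fin_ite ((k : ℕ)+1) (fun _ => starRingEnd ℂ (Ψ' (k : ℕ)) * Ψ' ((k : ℕ)+1) * c (k : ℕ))]
      split_ifs with ha hb hb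
      · rfl
      · omega
      · omega
      · rfl
    rw [Finset.sum_congr rfl fun k _ => h1 k]
    rw [Fin.sum_univ_eq_sum_range
      (fun m => if m < n then starRingEnd ℂ (Ψ' m) * Ψ' (m+1) * c m else 0) (n+1)]
    exact range_succ_ite n _
  have hsnd : ∑ k : Fin (n+1), ∑ j : Fin (n+1),
      (if (k : ℕ) = (j : ℕ) + 1 then
        starRingEnd ℂ (Ψ' ((j : ℕ)+1)) * Ψ' (j : ℕ) * d (j : ℕ) else 0)
      = ∑ k ∈ Finset.range n, starRingEnd ℂ (Ψ' (k+1)) * Ψ' k * d k := by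
    rw [Finset.sum_comm]
    have h1 : ∀ j : Fin (n+1), ∑ k : Fin (n+1),
        (if (k : ℕ) = (j : ℕ) + 1 then
          starRingEnd ℂ (Ψ' ((j : ℕ)+1)) * Ψ' (j : ℕ) * d (j : ℕ) else 0)
        = if (j : ℕ) < n then starRingEnd ℂ (Ψ' ((j : ℕ)+1)) * Ψ' (j : ℕ) * d (j : ℕ)
          else 0 := by
      intro j
      rw [sum_fin_ite ((j : ℕ)+1) (fun _ => starRingEnd ℂ (Ψ' ((j : ℕ)+1)) * Ψ' (j : ℕ) * d (j : ℕ))]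
      split_ifs with ha hb hb
      · rfl
      · omega
      · omega
      · rfl
    rw [Finset.sum_congr rfl fun j _ => h1 j]
    rw [Fin.sum_univ_eq_sum_range
      (fun m => if m < n then starRingEnd ℂ (Ψ' (m+1)) * Ψ' m * d m else 0) (n+1)]
    exact range_succ_ite n _
  rw [hfst, hsnd, ← Finset.sum_add_distrib]

/-- Expectation values of the spin operators in the spin coherent state
`ψ_k = √C(n,k)·z₁^{n−k}·z₂^k` (with `|z₁|² + |z₂|² = 1`):
`⟨ψ, J_x ψ⟩ = n·Re(conj(z₁)z₂)`, `⟨ψ, J_y ψ⟩ = n·Im(conj(z₁)z₂)`,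
`⟨ψ, J_z ψ⟩ = (n/2)(|z₁|² − |z₂|²)`. -/
theorem coherent_state_expectation (n : ℕ) (z₁ z₂ : ℂ)
    (h : ‖z₁‖ ^ 2 + ‖z₂‖ ^ 2 = 1)
    (ψ : Fin (n + 1) → ℂ)
    (hψ : ∀ k : Fin (n + 1),
      ψ k = (Real.sqrt (n.choose (k : ℕ) : ℝ) : ℂ) * z₁ ^ (n - (k : ℕ)) * z₂ ^ (k : ℕ)) :
    (∑ k : Fin (n + 1), starRingEnd ℂ (ψ k) * (Jx n).mulVec ψ k =
        (((n : ℝ) * (starRingEnd ℂ z₁ * z₂).re : ℝ) : ℂ)) ∧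
    (∑ k : Fin (n + 1), starRingEnd ℂ (ψ k) * (Jy n).mulVec ψ k =
        (((n : ℝ) * (starRingEnd ℂ z₁ * z₂).im : ℝ) : ℂ)) ∧
    (∑ k : Fin (n + 1), starRingEnd ℂ (ψ k) * (Jz n).mulVec ψ k =
        (((n : ℝ) / 2 * (‖z₁‖ ^ 2 - ‖z₂‖ ^ 2) : ℝ) : ℂ)) := by
  have hAB : ((‖z₁‖ ^ 2 : ℝ) : ℂ) + ((‖z₂‖ ^ 2 : ℝ) : ℂ) = 1 := by
    rw [← Complex.ofReal_add, h, Complex.ofReal_one]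
  have hψ' : ∀ k : Fin (n+1), ψ k = Psi n z₁ z₂ (k : ℕ) := fun k => hψ k
  set w := starRingEnd ℂ z₁ * z₂ with hw
  have hS : ∑ k ∈ Finset.range n,
      starRingEnd ℂ (Psi n z₁ z₂ k) * Psi n z₁ z₂ (k+1)
        * ((Real.sqrt (((k : ℝ) + 1) * ((n : ℝ) - (k : ℝ)))) : ℂ)
      = (n : ℂ) * w := key_sum n z₁ z₂ hAB
  have hS' : ∑ k ∈ Finset.range n,
      starRingEnd ℂ (Psi n z₁ z₂ (k+1)) * Psi n z₁ z₂ k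
        * ((Real.sqrt (((k : ℝ) + 1) * ((n : ℝ) - (k : ℝ)))) : ℂ)
      = (n : ℂ) * starRingEnd ℂ w := by
    have h1 := congrArg (starRingEnd ℂ) hS
    rw [_root_.map_sum, _root_.map_mul, Complex.conj_natCast] at h1
    rw [← h1]
    refine Finset.sum_congr rfl fun k _ => ?_
    rw [_root_.map_mul, _root_.map_mul, Complex.conj_conj, Complex.conj_ofReal]
    ring
  refine ⟨?_, ?_, ?_⟩
  · -- Jx
    rw [expect_offdiag n ψ (Psi n z₁ z₂) hψ'
      (fun m => ((1 / 2 : ℝ) : ℂ) * ((Real.sqrt (((m : ℝ) + 1) * ((n : ℝ) - (m : ℝ)))) : ℂ))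
      (fun m => ((1 / 2 : ℝ) : ℂ) * ((Real.sqrt (((m : ℝ) + 1) * ((n : ℝ) - (m : ℝ)))) : ℂ))
      (Jx n) (fun k j => rfl)]
    have h2 : ∀ k ∈ Finset.range n,
        starRingEnd ℂ (Psi n z₁ z₂ k) * Psi n z₁ z₂ (k+1)
            * (((1 / 2 : ℝ) : ℂ) * ((Real.sqrt (((k : ℝ) + 1) * ((n : ℝ) - (k : ℝ)))) : ℂ))
          + starRingEnd ℂ (Psi n z₁ z₂ (k+1)) * Psi n z₁ z₂ k
            * (((1 / 2 : ℝ) : ℂ) * ((Real.sqrt (((k : ℝ) + 1) * ((n : ℝ) - (k : ℝ)))) : ℂ))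
        = (1/2 : ℂ) * (starRingEnd ℂ (Psi n z₁ z₂ k) * Psi n z₁ z₂ (k+1)
              * ((Real.sqrt (((k : ℝ) + 1) * ((n : ℝ) - (k : ℝ)))) : ℂ))
          + (1/2 : ℂ) * (starRingEnd ℂ (Psi n z₁ z₂ (k+1)) * Psi n z₁ z₂ k
              * ((Real.sqrt (((k : ℝ) + 1) * ((n : ℝ) - (k : ℝ)))) : ℂ)) := by
      intro k _
      push_cast
      ring
    rw [Finset.sum_congr rfl h2, Finset.sum_add_distrib, ← Finset.mul_sum, ← Finset.mul_sum,
      hS, hS']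
    have h3 : w + starRingEnd ℂ w = ((2 * w.re : ℝ) : ℂ) := Complex.add_conj w
    push_cast at h3 ⊢
    linear_combination ((n : ℂ)/2) * h3
  · -- Jy
    rw [expect_offdiag n ψ (Psi n z₁ z₂) hψ'
      (fun m => -(Complex.I / 2) * ((Real.sqrt (((m : ℝ) + 1) * ((n : ℝ) - (m : ℝ)))) : ℂ))
      (fun m => (Complex.I / 2) * ((Real.sqrt (((m : ℝ) + 1) * ((n : ℝ) - (m : ℝ)))) : ℂ))
      (Jy n) (fun k j => rfl)]
    have h2 : ∀ k ∈ Finset.range n,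
        starRingEnd ℂ (Psi n z₁ z₂ k) * Psi n z₁ z₂ (k+1)
            * (-(Complex.I / 2) * ((Real.sqrt (((k : ℝ) + 1) * ((n : ℝ) - (k : ℝ)))) : ℂ))
          + starRingEnd ℂ (Psi n z₁ z₂ (k+1)) * Psi n z₁ z₂ k
            * ((Complex.I / 2) * ((Real.sqrt (((k : ℝ) + 1) * ((n : ℝ) - (k : ℝ)))) : ℂ))
        = (-(Complex.I / 2)) * (starRingEnd ℂ (Psi n z₁ z₂ k) * Psi n z₁ z₂ (k+1)
              * ((Real.sqrt (((k : ℝ) + 1) * ((n : ℝ) - (k : ℝ)))) : ℂ))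
          + (Complex.I / 2) * (starRingEnd ℂ (Psi n z₁ z₂ (k+1)) * Psi n z₁ z₂ k
              * ((Real.sqrt (((k : ℝ) + 1) * ((n : ℝ) - (k : ℝ)))) : ℂ)) := by
      intro k _
      ring
    rw [Finset.sum_congr rfl h2, Finset.sum_add_distrib, ← Finset.mul_sum, ← Finset.mul_sum,
      hS, hS']
    have h3 : w - starRingEnd ℂ w = ((2 * w.im : ℝ) : ℂ) * Complex.I := Complex.sub_conj w
    have hI : Complex.I * Complex.I = -1 := Complex.I_mul_I
    push_cast at h3 ⊢
    linear_combination (-(Complex.I/2) * (n : ℂ)) * h3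
      + (-((n : ℂ) * (w.im : ℂ))) * hI
  · -- Jz
    have hA1 : starRingEnd ℂ z₁ * z₁ = ((‖z₁‖ ^ 2 : ℝ) : ℂ) := by
      rw [mul_comm, Complex.mul_conj, Complex.normSq_eq_norm_sq]
    have hB1 : starRingEnd ℂ z₂ * z₂ = ((‖z₂‖ ^ 2 : ℝ) : ℂ) := by
      rw [mul_comm, Complex.mul_conj, Complex.normSq_eq_norm_sq]
    have hmv : ∀ k : Fin (n+1), starRingEnd ℂ (ψ k) * (Jz n).mulVec ψ k
        = (fun m : ℕ => starRingEnd ℂ (Psi n z₁ z₂ m)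
            * (((n : ℂ)/2 - (m : ℂ)) * Psi n z₁ z₂ m)) (k : ℕ) := by
      intro k
      rw [Jz, Matrix.mulVec_diagonal, hψ' k]
    rw [Finset.sum_congr rfl fun k _ => hmv k,
      Fin.sum_univ_eq_sum_range
        (fun m : ℕ => starRingEnd ℂ (Psi n z₁ z₂ m)
          * (((n : ℂ)/2 - (m : ℂ)) * Psi n z₁ z₂ m)) (n+1)]
    have hdiag : ∀ m ∈ Finset.range (n+1),
        starRingEnd ℂ (Psi n z₁ z₂ m) * (((n : ℂ)/2 - (m : ℂ)) * Psi n z₁ z₂ m)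
        = (n : ℂ)/2 * ((n.choose m : ℂ) * ((‖z₁‖ ^ 2 : ℝ) : ℂ) ^ (n-m)
              * ((‖z₂‖ ^ 2 : ℝ) : ℂ) ^ m)
          - ((n.choose m : ℂ) * (m : ℂ) * ((‖z₁‖ ^ 2 : ℝ) : ℂ) ^ (n-m)
              * ((‖z₂‖ ^ 2 : ℝ) : ℂ) ^ m) := by
      intro m _
      have hp : starRingEnd ℂ (Psi n z₁ z₂ m) * Psi n z₁ z₂ m
          = (n.choose m : ℂ) * ((‖z₁‖ ^ 2 : ℝ) : ℂ) ^ (n-m)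
              * ((‖z₂‖ ^ 2 : ℝ) : ℂ) ^ m := by
        unfold Psi
        rw [_root_.map_mul, _root_.map_mul, _root_.map_pow, _root_.map_pow, Complex.conj_ofReal]
        calc ((Real.sqrt (n.choose m : ℝ)) : ℂ) * starRingEnd ℂ z₁ ^ (n-m)
              * starRingEnd ℂ z₂ ^ m
              * (((Real.sqrt (n.choose m : ℝ)) : ℂ) * z₁ ^ (n-m) * z₂ ^ m)
            = (((Real.sqrt (n.choose m : ℝ)) : ℂ) * ((Real.sqrt (n.choose m : ℝ)) : ℂ))
              * (starRingEnd ℂ z₁ * z₁) ^ (n-m) * (starRingEnd ℂ z₂ * z₂) ^ m := by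
              rw [mul_pow, mul_pow]; ring
          _ = _ := by
              rw [hA1, hB1, ← Complex.ofReal_mul,
                Real.mul_self_sqrt (Nat.cast_nonneg _), Complex.ofReal_natCast]
      calc starRingEnd ℂ (Psi n z₁ z₂ m) * (((n : ℂ)/2 - (m : ℂ)) * Psi n z₁ z₂ m)
          = ((n : ℂ)/2 - (m : ℂ)) * (starRingEnd ℂ (Psi n z₁ z₂ m) * Psi n z₁ z₂ m) := by
            ring
        _ = _ := by rw [hp]; ring
    rw [Finset.sum_congr rfl hdiag, Finset.sum_sub_distrib, ← Finset.mul_sum,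
      binom_one hAB, binom_k hAB]
    push_cast at hAB ⊢
    linear_combination (-(n : ℂ)/2) * hAB
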